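/- Assume y = Au† (noise-free data) and let x(t) solve ẋ(t) = −C(t)AᵀΓ⁻¹(Ax(t)−y), x(0)=x₀, with C(t) = C₀(E+αtAᵀΓ⁻¹AC₀)⁻¹. Let x† be the ‖·‖_{C₀}-minimal solution of Ax = Au† relative to x₀. Then there is a constant K > 0 such that ‖x(t) − x†‖ ≤ K (1/(μ_k t))^{1/α} and ‖Ax(t) − y‖_Γ ≤ K (μ₁/t)^{1/α} for all t > 0, where μ₁ ≥ … ≥ μ_k > 0 are the nonzero eigenvalues of C₀AᵀΓ⁻¹A. -/

import Mathlib

open Matrix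

lemma aux_conj_mul {n : ℕ} (S Si X Y : Matrix (Fin n) (Fin n) ℝ) (h : Si * S = 1) :
    (S * X * Si) * (S * Y * Si) = S * (X * Y) * Si := by
  simp only [Matrix.mul_assoc]
  rw [← Matrix.mul_assoc Si S, h, Matrix.one_mul]

set_option maxHeartbeats 1000000 in
theorem convergence_rates {n m k : ℕ} (hkpos : 0 < k) (hk : k ≤ n) (α : ℝ) (hα : 1 ≤ α)
    (C₀ : Matrix (Fin n) (Fin n) ℝ) (hC₀ : C₀.PosDef)
    (A : Matrix (Fin m) (Fin n) ℝ)
    (Γ : Matrix (Fin m) (Fin m) ℝ) (hΓ : Γ.PosDef)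
    (S : Matrix (Fin n) (Fin n) ℝ) (μ : Fin n → ℝ)
    (hS : IsUnit S.det)
    (hμmono : ∀ i j : Fin n, i ≤ j → μ j ≤ μ i)
    (hμpos : ∀ i : Fin n, (i : ℕ) < k → 0 < μ i)
    (hμzero : ∀ i : Fin n, k ≤ (i : ℕ) → μ i = 0)
    (hdiag : C₀ * Aᵀ * Γ⁻¹ * A = S * Matrix.diagonal μ * S⁻¹)
    (Einf : Matrix (Fin n) (Fin n) ℝ)
    (hEinf : Einf = Matrix.diagonal (fun i : Fin n => if (i : ℕ) < k then (0 : ℝ) else 1))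
    (Cinf : Matrix (Fin n) (Fin n) ℝ) (hCinf : Cinf = S * Einf * S⁻¹ * C₀)
    (C : ℝ → Matrix (Fin n) (Fin n) ℝ)
    (hC : ∀ t : ℝ, C t = C₀ * (1 + (α * t) • (Aᵀ * Γ⁻¹ * A * C₀))⁻¹)
    (udag : Fin n → ℝ) (y : Fin m → ℝ) (hy : y = A *ᵥ udag)
    (x₀ : Fin n → ℝ) (x : ℝ → Fin n → ℝ) (hx0 : x 0 = x₀)
    (hx : ∀ t : ℝ, 0 ≤ t → ∀ i : Fin n,
      HasDerivAt (fun s => x s i)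
        (-((C t * Aᵀ * Γ⁻¹) *ᵥ (A *ᵥ x t - y)) i) t)
    (xdag : Fin n → ℝ)
    (hxdag : xdag = x₀ + (1 - Cinf * C₀⁻¹) *ᵥ (udag - x₀)) :
    ∃ K : ℝ, 0 < K ∧ ∀ t : ℝ, 0 < t →
      Real.sqrt ((x t - xdag) ⬝ᵥ (x t - xdag)) ≤
        K * (1 / (μ ⟨k - 1, by omega⟩ * t)) ^ ((1 : ℝ) / α) ∧
      Real.sqrt ((A *ᵥ x t - y) ⬝ᵥ (Γ⁻¹ *ᵥ (A *ᵥ x t - y))) ≤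
        K * (μ ⟨0, by omega⟩ / t) ^ ((1 : ℝ) / α) := by
  have hα0 : (0:ℝ) < α := lt_of_lt_of_le one_pos hα
  have hμ0 : ∀ i : Fin n, 0 ≤ μ i := fun i => by
    rcases lt_or_ge (i:ℕ) k with h|h
    · exact (hμpos i h).le
    · exact (hμzero i h).ge
  set km : Fin n := ⟨k-1, by omega⟩ with hkm
  set i0 : Fin n := ⟨0, by omega⟩ with hi0
  have hμkm : 0 < μ km := hμpos km (by simp [hkm]; omega)
  have hμi0 : 0 < μ i0 := hμpos i0 (by simpa [hi0] using hkpos)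
  have hμle : ∀ i : Fin n, (i:ℕ) < k → μ km ≤ μ i := fun i hi =>
    hμmono i km (by rw [Fin.le_def]; simp [hkm]; omega)
  set B := Aᵀ * Γ⁻¹ * A with hB
  set D := Matrix.diagonal μ with hD
  have hC₀u : IsUnit C₀.det := hC₀.det_pos.ne'.isUnit
  have hSS : S * S⁻¹ = 1 := mul_nonsing_inv S hS
  have hS'S : S⁻¹ * S = 1 := nonsing_inv_mul S hS
  have hC₀C : C₀ * C₀⁻¹ = 1 := mul_nonsing_inv _ hC₀u
  have hCC₀ : C₀⁻¹ * C₀ = 1 := nonsing_inv_mul _ hC₀u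
  have hCB : C₀ * B = S * D * S⁻¹ := by
    rw [hB, ← Matrix.mul_assoc, ← Matrix.mul_assoc]; exact hdiag
  have hΓinv : (Γ⁻¹).PosDef := hΓ.inv
  -- A * (S * Einf) = 0
  have hASE : A * (S * Einf) = 0 := by
    have hDE : D * Einf = 0 := by
      rw [hD, hEinf, Matrix.diagonal_mul_diagonal]
      ext i j
      rcases lt_or_ge (i:ℕ) k with h|h
      · simp [Matrix.diagonal_apply, h]
      · simp [Matrix.diagonal_apply, hμzero i h]
    have hBSE : B * (S * Einf) = 0 := by
      have h1 : C₀ * (B * (S * Einf)) = 0 := by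
        have e1 : C₀ * (B * (S * Einf)) = S * D * S⁻¹ * S * Einf := by
          rw [← Matrix.mul_assoc, ← Matrix.mul_assoc, hCB]
        rw [e1, Matrix.mul_assoc (S * D), hS'S, Matrix.mul_one, Matrix.mul_assoc, hDE,
          Matrix.mul_zero]
      calc B * (S * Einf) = (C₀⁻¹ * C₀) * (B * (S * Einf)) := by rw [hCC₀, Matrix.one_mul]
        _ = C₀⁻¹ * (C₀ * (B * (S * Einf))) := by rw [Matrix.mul_assoc]
        _ = 0 := by rw [h1, Matrix.mul_zero]
    ext l j
    set v : Fin n → ℝ := fun i => (S * Einf) i j with hv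
    have hBv : B *ᵥ v = 0 := by
      ext i
      have e2 : (B *ᵥ v) i = (B * (S * Einf)) i j := by
        simp [Matrix.mulVec, Matrix.mul_apply, dotProduct, hv]
      rw [e2, hBSE]; simp
    have hdot : (A *ᵥ v) ⬝ᵥ (Γ⁻¹ *ᵥ (A *ᵥ v)) = 0 := by
      have h1 : v ⬝ᵥ (B *ᵥ v) = 0 := by rw [hBv, dotProduct_zero]
      have h2 : v ⬝ᵥ (B *ᵥ v) = (A *ᵥ v) ⬝ᵥ (Γ⁻¹ *ᵥ (A *ᵥ v)) := by
        rw [hB, Matrix.mul_assoc, ← Matrix.mulVec_mulVec, dotProduct_mulVec,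
          Matrix.vecMul_transpose, Matrix.mulVec_mulVec]
      rw [← h2, h1]
    have hAv : A *ᵥ v = 0 := by
      by_contra hne
      have := hΓinv.dotProduct_mulVec_pos hne
      simp only [star_trivial] at this
      rw [hdot] at this
      exact lt_irrefl 0 this
    have e3 : (A * (S * Einf)) l j = (A *ᵥ v) l := by
      simp [Matrix.mulVec, Matrix.mul_apply, dotProduct, hv]
    rw [e3, hAv]; simp
  have hCinfC : Cinf * C₀⁻¹ = S * Einf * S⁻¹ := by
    rw [hCinf, Matrix.mul_assoc (S * Einf * S⁻¹), hC₀C, Matrix.mul_one]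
  -- A xdag = y
  have hACinf : A * (1 - Cinf * C₀⁻¹) = A := by
    have h2 : A * (S * Einf * S⁻¹) = 0 := by
      rw [show S * Einf * S⁻¹ = (S * Einf) * S⁻¹ from rfl, ← Matrix.mul_assoc, hASE,
        Matrix.zero_mul]
    rw [hCinfC, Matrix.mul_sub, Matrix.mul_one, h2, sub_zero]
  have hAxdag : A *ᵥ xdag = y := by
    rw [hxdag, hy, mulVec_add, mulVec_mulVec, hACinf, mulVec_sub]
    abel
  -- positivity of 1 + α t μ i
  have hg : ∀ t:ℝ, 0 ≤ t → ∀ i : Fin n, (0:ℝ) < 1 + α*t*μ i := by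
    intro t ht i
    have : 0 ≤ α*t*μ i := mul_nonneg (mul_nonneg hα0.le ht) (hμ0 i)
    linarith
  -- key matrix identity
  have hkey : ∀ t:ℝ, 0 ≤ t → S⁻¹ * (C t * B) =
      Matrix.diagonal (fun i => μ i / (1+α*t*μ i)) * S⁻¹ := by
    intro t ht
    set g : Fin n → ℝ := fun i => 1 + α*t*μ i with hgdef
    have hgpos : ∀ i, 0 < g i := hg t ht
    set P : Matrix (Fin n) (Fin n) ℝ := S * Matrix.diagonal g * S⁻¹ with hP
    set Q : Matrix (Fin n) (Fin n) ℝ := S * Matrix.diagonal (fun i => (g i)⁻¹) * S⁻¹ with hQ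
    have hPQ : P * Q = 1 := by
      rw [hP, hQ, aux_conj_mul _ _ _ _ hS'S, Matrix.diagonal_mul_diagonal]
      have e : (fun i => g i * (g i)⁻¹) = fun _ => (1:ℝ) := by
        funext i; exact mul_inv_cancel₀ (hgpos i).ne'
      rw [e, Matrix.diagonal_one, Matrix.mul_one, hSS]
    have hMP : 1 + (α * t) • (B * C₀) = C₀⁻¹ * P * C₀ := by
      have hdg : Matrix.diagonal g = 1 + (α * t) • D := by
        rw [hD]
        ext i j
        rcases eq_or_ne i j with rfl|h
        · simp [hgdef]
        · simp [Matrix.diagonal_apply_ne _ h, Matrix.one_apply_ne h]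
      have h1 : S * (1 + (α*t) • D) * S⁻¹ = 1 + (α*t) • (C₀ * B) := by
        rw [Matrix.mul_add, Matrix.add_mul, Matrix.mul_one, hSS, Matrix.mul_smul,
          Matrix.smul_mul, ← hCB]
      have h2 : C₀⁻¹ * (1 + (α*t) • (C₀ * B)) * C₀ = 1 + (α*t) • (B * C₀) := by
        rw [Matrix.mul_add, Matrix.mul_one, Matrix.add_mul, Matrix.mul_smul, Matrix.smul_mul]
        simp only [← Matrix.mul_assoc]
        rw [hCC₀, Matrix.one_mul]
      rw [hP, hdg, h1, h2]
    have hinv : (1 + (α * t) • (B * C₀))⁻¹ = C₀⁻¹ * Q * C₀ := by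
      apply Matrix.inv_eq_right_inv
      rw [hMP]
      calc C₀⁻¹ * P * C₀ * (C₀⁻¹ * Q * C₀) = C₀⁻¹ * (P * Q) * C₀ :=
            aux_conj_mul _ _ _ _ hC₀C
        _ = 1 := by rw [hPQ, Matrix.mul_one, hCC₀]
    have hCt : C t = Q * C₀ := by
      rw [hC t, hinv, ← Matrix.mul_assoc, ← Matrix.mul_assoc, hC₀C, Matrix.one_mul]
    have hCtB : C t * B = S * Matrix.diagonal (fun i => μ i / g i) * S⁻¹ := by
      rw [hCt, hQ]
      calc S * Matrix.diagonal (fun i => (g i)⁻¹) * S⁻¹ * C₀ * B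
          = S * Matrix.diagonal (fun i => (g i)⁻¹) * S⁻¹ * (C₀ * B) := by
            rw [Matrix.mul_assoc]
        _ = S * Matrix.diagonal (fun i => (g i)⁻¹) * S⁻¹ * (S * D * S⁻¹) := by rw [hCB]
        _ = S * (Matrix.diagonal (fun i => (g i)⁻¹) * D) * S⁻¹ := by
            rw [hD] at *
            rw [← aux_conj_mul S S⁻¹ _ _ hS'S]
        _ = S * Matrix.diagonal (fun i => μ i / g i) * S⁻¹ := by
            rw [hD, Matrix.diagonal_mul_diagonal]
            have e : (fun i => (g i)⁻¹ * μ i) = fun i => μ i / g i := by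
              funext i; rw [inv_mul_eq_div]
            rw [e]
    rw [hCtB, ← Matrix.mul_assoc, ← Matrix.mul_assoc, hS'S, Matrix.one_mul]
  set w : ℝ → Fin n → ℝ := fun t => S⁻¹ *ᵥ (x t - xdag) with hw
  have hSw : ∀ t, S *ᵥ w t = x t - xdag := fun t => by
    rw [hw, mulVec_mulVec, hSS, one_mulVec]
  -- derivative of w
  have hwd : ∀ t:ℝ, 0 ≤ t → ∀ i, HasDerivAt (fun s => w s i)
      (-(μ i / (1+α*t*μ i) * w t i)) t := by
    intro t ht i
    have h1 : HasDerivAt (fun s => w s i)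
        (∑ j, S⁻¹ i j * (-((C t * Aᵀ * Γ⁻¹) *ᵥ (A *ᵥ x t - y)) j)) t := by
      have e1 : (fun s => w s i) = fun s => ∑ j, S⁻¹ i j * (x s j - xdag j) := by
        funext s; simp [hw, Matrix.mulVec, dotProduct, Pi.sub_apply]
      rw [e1]
      exact HasDerivAt.fun_sum fun j _ => (((hx t ht j).sub_const (xdag j)).const_mul (S⁻¹ i j))
    have h2 : (∑ j, S⁻¹ i j * (-((C t * Aᵀ * Γ⁻¹) *ᵥ (A *ᵥ x t - y)) j))
        = -(μ i / (1+α*t*μ i) * w t i) := by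
      have e1 : A *ᵥ x t - y = A *ᵥ (x t - xdag) := by rw [mulVec_sub, hAxdag]
      have e2 : ∀ v : Fin n → ℝ, (∑ j, S⁻¹ i j * (-(v j))) = -((S⁻¹ *ᵥ v) i) := by
        intro v
        simp [Matrix.mulVec, dotProduct, mul_neg]
      rw [e2 _, e1, Matrix.mulVec_mulVec, Matrix.mulVec_mulVec]
      have e3 : S⁻¹ * (C t * Aᵀ * Γ⁻¹) * A
          = Matrix.diagonal (fun i => μ i / (1+α*t*μ i)) * S⁻¹ := by
        have e4 : S⁻¹ * (C t * Aᵀ * Γ⁻¹) * A = S⁻¹ * (C t * B) := by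
          rw [hB]; simp only [Matrix.mul_assoc]
        rw [e4, hkey t ht]
      have hwt : S⁻¹ *ᵥ (x t - xdag) = w t := by simp only [hw]
      rw [e3, ← Matrix.mulVec_mulVec, hwt, Matrix.mulVec_diagonal]
    rw [← h2]
    exact h1
  -- explicit solution
  have hsol : ∀ t:ℝ, 0 ≤ t → ∀ i, w t i = w 0 i * (1+α*t*μ i) ^ (-(1/α) : ℝ) := by
    intro t ht i
    have hp0 : 0 < 1/α := by positivity
    set p : ℝ := 1/α with hp
    set f : ℝ → ℝ := fun s => w s i * (1+α*s*μ i) ^ p with hf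
    have hfd : ∀ s:ℝ, 0 ≤ s → HasDerivAt f 0 s := by
      intro s hs
      have hgs : (0:ℝ) < 1 + α*s*μ i := hg s hs i
      have hb : HasDerivAt (fun u : ℝ => 1 + α*u*μ i) (α * μ i) s := by
        have h1 : HasDerivAt (fun u : ℝ => α*u*μ i) (α * μ i) s := by
          have := ((hasDerivAt_id s).const_mul α).mul_const (μ i)
          simpa [mul_assoc, mul_comm] using this
        simpa using h1.const_add 1
      have hr : HasDerivAt (fun u : ℝ => (1 + α*u*μ i) ^ p)
          (α * μ i * p * (1 + α*s*μ i) ^ (p - 1)) s :=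
        hb.rpow_const (Or.inl hgs.ne')
      have hprod := (hwd s hs i).mul hr
      have hval : -(μ i / (1+α*s*μ i) * w s i) * (1+α*s*μ i) ^ p
          + w s i * (α * μ i * p * (1+α*s*μ i) ^ (p-1)) = 0 := by
        rw [Real.rpow_sub_one hgs.ne']
        field_simp [hp]
        have hαp : α * p = 1 := by rw [hp]; exact mul_one_div_cancel hα0.ne'
        linear_combination (μ i * w s i * (1 + μ i * α * s) ^ p * (1 + μ i * α * s)⁻¹) * hαp
      rw [hval] at hprod
      exact hprod
    have hconst := constant_of_has_deriv_right_zero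
      (f := f) (a := 0) (b := t)
      (fun s hs => ((hfd s hs.1).continuousAt.continuousWithinAt))
      (fun s hs => (hfd s hs.1).hasDerivWithinAt)
    have hft : f t = f 0 := hconst t (Set.mem_Icc.mpr ⟨ht, le_refl t⟩)
    have hf0 : f 0 = w 0 i := by simp [hf]
    have hgt : (0:ℝ) < 1 + α*t*μ i := hg t ht i
    have hrpos : (0:ℝ) < (1+α*t*μ i) ^ p := Real.rpow_pos_of_pos hgt p
    have hmain : w t i * (1+α*t*μ i) ^ p = w 0 i := by rw [← hf0, ← hft]
    rw [Real.rpow_neg hgt.le, hp]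
    field_simp at hmain ⊢
    linarith [hmain]
  -- w 0 vanishes for i ≥ k
  have hw0 : ∀ i : Fin n, k ≤ (i:ℕ) → w 0 i = 0 := by
    intro i hi
    have hxd : x 0 - xdag = -((1 - Cinf * C₀⁻¹) *ᵥ (udag - x₀)) := by
      rw [hx0, hxdag]; abel
    have hSCinf : S⁻¹ * (1 - Cinf * C₀⁻¹) = (1 - Einf) * S⁻¹ := by
      rw [hCinfC, Matrix.mul_sub, Matrix.mul_one, Matrix.sub_mul, Matrix.one_mul]
      congr 1
      rw [← Matrix.mul_assoc, ← Matrix.mul_assoc, hS'S, Matrix.one_mul]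
    have h1 : w 0 i = -((((1 - Einf) * S⁻¹) *ᵥ (udag - x₀)) i) := by
      rw [hw]
      show (S⁻¹ *ᵥ (x 0 - xdag)) i = _
      rw [hxd, Matrix.mulVec_neg, Matrix.mulVec_mulVec, hSCinf, Pi.neg_apply]
    have hE1 : (1 : Matrix (Fin n) (Fin n) ℝ) - Einf
        = Matrix.diagonal (fun i : Fin n => 1 - (if (i:ℕ) < k then (0:ℝ) else 1)) := by
      rw [hEinf, ← Matrix.diagonal_one, Matrix.diagonal_sub]
    rw [h1, hE1, ← Matrix.mulVec_mulVec, Matrix.mulVec_diagonal]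
    simp [Nat.not_lt.mpr hi]
  -- pointwise bound
  have hwbound : ∀ t:ℝ, 0 < t → ∀ i, |w t i| ≤ |w 0 i| * (1/(μ km * t)) ^ ((1:ℝ)/α) := by
    intro t ht i
    have hp0 : (0:ℝ) < 1/α := by positivity
    rcases lt_or_ge (i:ℕ) k with hik|hik
    · have hgt : (0:ℝ) < 1 + α*t*μ i := hg t ht.le i
      have hbase : (0:ℝ) < μ km * t := mul_pos hμkm ht
      have h1 : μ km * t ≤ 1 + α*t*μ i := by
        have h2 : μ km ≤ μ i := hμle i hik
        nlinarith [mul_nonneg (mul_nonneg (sub_nonneg.mpr hα) ht.le) (hμ0 i),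
          mul_nonneg ht.le (sub_nonneg.mpr h2)]
      have hmono : (μ km * t) ^ ((1:ℝ)/α) ≤ (1 + α*t*μ i) ^ ((1:ℝ)/α) :=
        Real.rpow_le_rpow hbase.le h1 hp0.le
      have hrp : (1+α*t*μ i) ^ (-(1/α) : ℝ) ≤ (1/(μ km * t)) ^ ((1:ℝ)/α) := by
        rw [Real.rpow_neg hgt.le, one_div (μ km * t), Real.inv_rpow hbase.le]
        exact inv_anti₀ (Real.rpow_pos_of_pos hbase _) hmono
      rw [hsol t ht.le i, abs_mul]
      apply mul_le_mul_of_nonneg_left _ (abs_nonneg _)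
      rw [abs_of_pos (Real.rpow_pos_of_pos hgt _)]
      exact hrp
    · rw [hsol t ht.le i, hw0 i hik]
      simp

  -- final bounds
  set p : ℝ := (1:ℝ)/α with hp
  have hp0 : 0 < p := by positivity
  set r : ℝ → ℝ := fun t => (1/(μ km * t)) ^ p with hr
  have hr0 : ∀ t:ℝ, 0 < t → 0 ≤ r t := fun t ht => Real.rpow_nonneg (by positivity) p
  obtain ⟨c, hc⟩ : ∃ c : Fin n → ℝ, c = fun j => ∑ i, |S j i| * |w 0 i| := ⟨_, rfl⟩
  obtain ⟨d, hd⟩ : ∃ d : Fin m → ℝ, d = fun l => ∑ i, |(A*S) l i| * |w 0 i| := ⟨_, rfl⟩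
  have hc0 : ∀ j, 0 ≤ c j := by
    intro j; rw [hc]
    exact Finset.sum_nonneg fun i _ => mul_nonneg (abs_nonneg _) (abs_nonneg _)
  have hd0 : ∀ l, 0 ≤ d l := by
    intro l; rw [hd]
    exact Finset.sum_nonneg fun i _ => mul_nonneg (abs_nonneg _) (abs_nonneg _)
  set K₁ : ℝ := Real.sqrt (∑ j, (c j)^2) with hK₁
  have hsum0 : 0 ≤ ∑ j, (c j)^2 := Finset.sum_nonneg fun j _ => sq_nonneg _
  obtain ⟨X, hX⟩ : ∃ X : ℝ, X = ∑ l, ∑ l', d l * |Γ⁻¹ l l'| * d l' := ⟨_, rfl⟩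
  have hX0 : 0 ≤ X := by
    rw [hX]
    exact Finset.sum_nonneg fun l _ => Finset.sum_nonneg fun l' _ =>
      mul_nonneg (mul_nonneg (hd0 l) (abs_nonneg _)) (hd0 l')
  set K₂ : ℝ := Real.sqrt X with hK₂
  set c₂ : ℝ := (1/(μ i0 * μ km)) ^ p with hc₂
  have hc₂0 : 0 ≤ c₂ := Real.rpow_nonneg (by positivity) p
  have hK₁0 : 0 ≤ K₁ := Real.sqrt_nonneg _
  have hK₂0 : 0 ≤ K₂ := Real.sqrt_nonneg _
  refine ⟨K₁ + K₂ * c₂ + 1, by nlinarith [mul_nonneg hK₂0 hc₂0], ?_⟩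
  intro t ht
  have hrtt : 0 ≤ r t := hr0 t ht
  -- component bounds on x t - xdag
  have hv : ∀ j, |(x t - xdag) j| ≤ c j * r t := by
    intro j
    have hxw : (x t - xdag) j = ∑ i, S j i * w t i := by
      rw [← hSw t]; simp [Matrix.mulVec, dotProduct]
    rw [hxw]
    calc |∑ i, S j i * w t i| ≤ ∑ i, |S j i * w t i| := Finset.abs_sum_le_sum_abs _ _
      _ ≤ ∑ i, |S j i| * (|w 0 i| * r t) := by
          apply Finset.sum_le_sum; intro i _
          rw [abs_mul]
          exact mul_le_mul_of_nonneg_left (hwbound t ht i) (abs_nonneg _)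
      _ = c j * r t := by
          simp only [hc]
          rw [Finset.sum_mul]
          exact Finset.sum_congr rfl fun i _ => (mul_assoc _ _ _).symm
  constructor
  · -- first bound
    have h1 : (x t - xdag) ⬝ᵥ (x t - xdag) ≤ (∑ j, (c j)^2) * (r t)^2 := by
      calc (x t - xdag) ⬝ᵥ (x t - xdag) = ∑ j, ((x t - xdag) j)^2 := by
            simp [dotProduct, sq]
        _ ≤ ∑ j, (c j * r t)^2 := by
            apply Finset.sum_le_sum; intro j _
            rw [← sq_abs]
            exact pow_le_pow_left₀ (abs_nonneg _) (hv j) 2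
        _ = (∑ j, (c j)^2) * (r t)^2 := by
            rw [Finset.sum_mul]
            exact Finset.sum_congr rfl fun j _ => by ring
    calc Real.sqrt ((x t - xdag) ⬝ᵥ (x t - xdag))
        ≤ Real.sqrt ((∑ j, (c j)^2) * (r t)^2) := Real.sqrt_le_sqrt h1
      _ = K₁ * r t := by
          rw [Real.sqrt_mul hsum0, Real.sqrt_sq hrtt, hK₁]
      _ ≤ (K₁ + K₂ * c₂ + 1) * r t := by
          apply mul_le_mul_of_nonneg_right _ hrtt
          nlinarith [mul_nonneg hK₂0 hc₂0]
  · -- second bound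
    have hAe : A *ᵥ x t - y = (A * S) *ᵥ w t := by
      rw [← hAxdag, ← mulVec_sub, ← hSw t, Matrix.mulVec_mulVec]
    have hu : ∀ l, |(A *ᵥ x t - y) l| ≤ d l * r t := by
      intro l
      rw [hAe]
      calc |((A*S) *ᵥ w t) l| = |∑ i, (A*S) l i * w t i| := by
            simp [Matrix.mulVec, dotProduct]
        _ ≤ ∑ i, |(A*S) l i * w t i| := Finset.abs_sum_le_sum_abs _ _
        _ ≤ ∑ i, |(A*S) l i| * (|w 0 i| * r t) := by
            apply Finset.sum_le_sum; intro i _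
            rw [abs_mul]
            exact mul_le_mul_of_nonneg_left (hwbound t ht i) (abs_nonneg _)
        _ = d l * r t := by
            simp only [hd]
            rw [Finset.sum_mul]
            exact Finset.sum_congr rfl fun i _ => (mul_assoc _ _ _).symm
    have h2 : (A *ᵥ x t - y) ⬝ᵥ (Γ⁻¹ *ᵥ (A *ᵥ x t - y)) ≤ X * (r t)^2 := by
      calc (A *ᵥ x t - y) ⬝ᵥ (Γ⁻¹ *ᵥ (A *ᵥ x t - y))
          = ∑ l, ∑ l', (A *ᵥ x t - y) l * (Γ⁻¹ l l' * (A *ᵥ x t - y) l') := by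
            simp [dotProduct, Matrix.mulVec, Finset.mul_sum]
        _ ≤ ∑ l, ∑ l', (d l * r t) * (|Γ⁻¹ l l'| * (d l' * r t)) := by
            apply Finset.sum_le_sum; intro l _
            apply Finset.sum_le_sum; intro l' _
            calc (A *ᵥ x t - y) l * (Γ⁻¹ l l' * (A *ᵥ x t - y) l')
                ≤ |(A *ᵥ x t - y) l * (Γ⁻¹ l l' * (A *ᵥ x t - y) l')| := le_abs_self _
              _ = |(A *ᵥ x t - y) l| * (|Γ⁻¹ l l'| * |(A *ᵥ x t - y) l'|) := by
                  rw [abs_mul, abs_mul]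
              _ ≤ (d l * r t) * (|Γ⁻¹ l l'| * (d l' * r t)) :=
                  mul_le_mul (hu l)
                    (mul_le_mul_of_nonneg_left (hu l') (abs_nonneg _))
                    (mul_nonneg (abs_nonneg _) (abs_nonneg _))
                    (mul_nonneg (hd0 l) hrtt)
        _ = X * (r t)^2 := by
            rw [hX, Finset.sum_mul]
            refine Finset.sum_congr rfl fun l _ => ?_
            rw [Finset.sum_mul]
            exact Finset.sum_congr rfl fun l' _ => by ring
    have hrsplit : r t = (μ i0 / t) ^ p * c₂ := by
      have e : (1:ℝ)/(μ km * t) = (μ i0 / t) * (1/(μ i0 * μ km)) := by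
        have h1 : μ i0 ≠ 0 := hμi0.ne'
        have h2 : μ km ≠ 0 := hμkm.ne'
        have h3 : t ≠ 0 := ht.ne'
        field_simp
      simp only [hr, hc₂]
      rw [e, Real.mul_rpow (by positivity) (by positivity)]
    calc Real.sqrt ((A *ᵥ x t - y) ⬝ᵥ (Γ⁻¹ *ᵥ (A *ᵥ x t - y)))
        ≤ Real.sqrt (X * (r t)^2) := Real.sqrt_le_sqrt h2
      _ = K₂ * r t := by rw [Real.sqrt_mul hX0, Real.sqrt_sq hrtt, hK₂]
      _ = (K₂ * c₂) * (μ i0 / t) ^ p := by rw [hrsplit]; ring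
      _ ≤ (K₁ + K₂ * c₂ + 1) * (μ i0 / t) ^ p := by
          apply mul_le_mul_of_nonneg_right _ (Real.rpow_nonneg (by positivity) p)
          nlinarith
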